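/- A linear map Λ : M_d(ℂ) → M_d(ℂ) is r-positive if and only if (id_d ⊗ Λ)(σ) is positive semidefinite for every positive semidefinite σ ∈ M_d ⊗ M_d of Schmidt number at most r. -/

import Mathlib

open Matrix BigOperators
open scoped ComplexOrder

/-- ψ ∈ ℂ^d ⊗ ℂ^d (modeled on `Fin d × Fin d`) has Schmidt rank at most k. -/
def schmidtRankLE (d k : ℕ) (ψ : Fin d × Fin d → ℂ) : Prop :=
  ∃ u v : Fin k → Fin d → ℂ, ψ = fun p => ∑ t, u t p.1 * v t p.2

/-- ρ on ℂ^d ⊗ ℂ^d has Schmidt number at most k. -/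
def hasSchmidtNumberLE (d k : ℕ) (ρ : Matrix (Fin d × Fin d) (Fin d × Fin d) ℂ) : Prop :=
  ∃ (n : ℕ) (c : Fin n → ℝ) (ψ : Fin n → (Fin d × Fin d → ℂ)),
    (∀ m, 0 ≤ c m) ∧ (∀ m, schmidtRankLE d k (ψ m)) ∧
    ρ = ∑ m, (c m : ℂ) • Matrix.vecMulVec (ψ m) (star (ψ m))

/-- The ampliation id_n ⊗ Λ of a map Λ on M_d, acting blockwise. -/
def idTensor (n d : ℕ) (Λ : Matrix (Fin d) (Fin d) ℂ → Matrix (Fin d) (Fin d) ℂ)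
    (σ : Matrix (Fin n × Fin d) (Fin n × Fin d) ℂ) :
    Matrix (Fin n × Fin d) (Fin n × Fin d) ℂ :=
  Matrix.of fun p q => Λ (Matrix.of fun i j => σ (p.1, i) (q.1, j)) p.2 q.2

/-- Λ is k-positive: id_{M_k} ⊗ Λ preserves positive semidefiniteness. -/
def kPositive (k d : ℕ) (Λ : Matrix (Fin d) (Fin d) ℂ → Matrix (Fin d) (Fin d) ℂ) : Prop :=
  ∀ σ : Matrix (Fin k × Fin d) (Fin k × Fin d) ℂ,
    σ.PosSemidef → (idTensor k d Λ σ).PosSemidef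

/- ### Auxiliary lemmas -/

lemma vecMulVec_star_posSemidef {m : Type*} [Fintype m] (v : m → ℂ) :
    (Matrix.vecMulVec v (star v)).PosSemidef := by
  refine Matrix.PosSemidef.of_dotProduct_mulVec_nonneg ?_ ?_
  · ext i j
    simp [vecMulVec_apply, conjTranspose_apply, mul_comm]
  · intro x
    have : star x ⬝ᵥ (Matrix.vecMulVec v (star v)) *ᵥ x
        = star (star v ⬝ᵥ x) * (star v ⬝ᵥ x) := by
      simp only [dotProduct, mulVec, vecMulVec_apply, Pi.star_apply, star_sum, star_mul',
        star_star, Finset.mul_sum, Finset.sum_mul]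
      rw [Finset.sum_comm]
      exact Finset.sum_congr rfl fun i _ => Finset.sum_congr rfl fun j _ => by ring
    rw [this]
    exact star_mul_self_nonneg _

lemma smul_posSemidef {m : Type*} [Fintype m] {N : Matrix m m ℂ} (hN : N.PosSemidef)
    {c : ℝ} (hc : 0 ≤ c) : ((c : ℂ) • N).PosSemidef := by
  refine Matrix.PosSemidef.of_dotProduct_mulVec_nonneg ?_ ?_
  · ext i j
    simp [conjTranspose_apply, hN.1.apply]
  · intro x
    simp only [smul_mulVec, dotProduct_smul, smul_eq_mul]
    exact mul_nonneg (by exact_mod_cast hc) (hN.dotProduct_mulVec_nonneg x)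

lemma posSemidef_sum {m ι : Type*} [Fintype m] [DecidableEq ι] (s : Finset ι)
    (f : ι → Matrix m m ℂ)
    (h : ∀ i ∈ s, (f i).PosSemidef) : (∑ i ∈ s, f i).PosSemidef := by
  induction s using Finset.induction_on with
  | empty => simpa using Matrix.PosSemidef.zero
  | insert a s hx ih =>
    rw [Finset.sum_insert hx]
    exact (h _ (Finset.mem_insert_self _ _)).add
      (ih fun i hi => h i (Finset.mem_insert_of_mem hi))

lemma idTensor_sum {n d : ℕ} (Λ : Matrix (Fin d) (Fin d) ℂ →ₗ[ℂ] Matrix (Fin d) (Fin d) ℂ)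
    {ι : Type*} [Fintype ι] (A : ι → Matrix (Fin n × Fin d) (Fin n × Fin d) ℂ) :
    idTensor n d (fun M => Λ M) (∑ m, A m) = ∑ m, idTensor n d (fun M => Λ M) (A m) := by
  ext ⟨a, i⟩ ⟨b, j⟩
  show Λ _ i j = _
  have hblock : (Matrix.of fun i' j' => (∑ m, A m) (a, i') (b, j'))
      = ∑ m, (Matrix.of fun i' j' => A m (a, i') (b, j')) := by
    ext i' j'
    simp [Matrix.sum_apply]
  rw [hblock, map_sum]
  simp [Matrix.sum_apply, idTensor]

lemma idTensor_smul {n d : ℕ} (Λ : Matrix (Fin d) (Fin d) ℂ →ₗ[ℂ] Matrix (Fin d) (Fin d) ℂ)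
    (c : ℂ) (A : Matrix (Fin n × Fin d) (Fin n × Fin d) ℂ) :
    idTensor n d (fun M => Λ M) (c • A) = c • idTensor n d (fun M => Λ M) A := by
  ext ⟨a, i⟩ ⟨b, j⟩
  show Λ _ i j = _
  have hblock : (Matrix.of fun i' j' => (c • A) (a, i') (b, j'))
      = c • (Matrix.of fun i' j' => A (a, i') (b, j')) := by
    ext i' j'
    simp
  rw [hblock, _root_.map_smul]
  simp [idTensor]

lemma idTensor_conj (n n' d : ℕ)
    (Λ : Matrix (Fin d) (Fin d) ℂ →ₗ[ℂ] Matrix (Fin d) (Fin d) ℂ)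
    (E : Fin n → Fin n' → ℂ) (ψ : Fin n' × Fin d → ℂ)
    (w : Fin n × Fin d → ℂ)
    (hw : ∀ p : Fin n × Fin d, w p = ∑ s, E p.1 s * ψ (s, p.2)) :
    idTensor n d (fun M => Λ M) (Matrix.vecMulVec w (star w)) =
      (Matrix.of fun (p : Fin n × Fin d) (q : Fin n' × Fin d) =>
        E p.1 q.1 * (if p.2 = q.2 then (1:ℂ) else 0)) *
      idTensor n' d (fun M => Λ M) (Matrix.vecMulVec ψ (star ψ)) *
      (Matrix.of fun (p : Fin n × Fin d) (q : Fin n' × Fin d) =>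
        E p.1 q.1 * (if p.2 = q.2 then (1:ℂ) else 0))ᴴ := by
  ext ⟨a, i⟩ ⟨b, j⟩
  have hblock : (Matrix.of fun i' j' => Matrix.vecMulVec w (star w) (a, i') (b, j'))
      = ∑ s : Fin n', ∑ t : Fin n', (E a s * star (E b t)) •
          (Matrix.of fun i' j' => Matrix.vecMulVec ψ (star ψ) (s, i') (t, j')) := by
    ext i' j'
    simp only [Matrix.of_apply, Matrix.vecMulVec_apply, Pi.star_apply, hw,
      Matrix.sum_apply, Matrix.smul_apply, smul_eq_mul, star_sum, Finset.sum_mul,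
      Finset.mul_sum, star_mul']
    rw [Finset.sum_comm]
    exact Finset.sum_congr rfl fun s _ => Finset.sum_congr rfl fun t _ => by ring
  show Λ _ i j = _
  rw [hblock, map_sum]
  simp only [map_sum, _root_.map_smul, Matrix.sum_apply, Matrix.smul_apply, smul_eq_mul]
  simp only [Matrix.mul_apply, Matrix.conjTranspose_apply, Matrix.of_apply,
    Fintype.sum_prod_type, mul_ite, ite_mul, mul_zero, zero_mul, mul_one, one_mul,
    star_mul', star_one, star_zero, apply_ite (star : ℂ → ℂ), Finset.sum_ite_eq,
    Finset.sum_ite_eq', Finset.mem_univ, if_true]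
  simp only [Finset.sum_mul]
  rw [Finset.sum_comm]
  refine Finset.sum_congr rfl fun s _ => Finset.sum_congr rfl fun t _ => ?_
  show E a t * star (E b s) *
        (Λ (Matrix.of fun i' j' => Matrix.vecMulVec ψ (star ψ) (t, i') (s, j')) i j)
      = E a t *
        (Λ (Matrix.of fun i' j' => Matrix.vecMulVec ψ (star ψ) (t, i') (s, j')) i j) *
        star (E b s)
  ring

/-- a linear map Λ on M_d is r-positive iff (id_d ⊗ Λ)(σ) is
positive semidefinite for every positive semidefinite σ on ℂ^d ⊗ ℂ^d of Schmidt
number at most r. -/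
theorem rPositive_iff_posSemidef_on_schmidt_class (d r : ℕ)
    (Λ : Matrix (Fin d) (Fin d) ℂ →ₗ[ℂ] Matrix (Fin d) (Fin d) ℂ) :
    kPositive r d (fun M => Λ M) ↔
    ∀ σ : Matrix (Fin d × Fin d) (Fin d × Fin d) ℂ,
      σ.PosSemidef → hasSchmidtNumberLE d r σ →
        (idTensor d d (fun M => Λ M) σ).PosSemidef := by
  constructor
  · -- forward
    rintro h σ hσ ⟨n, c, ψ, hc, hrank, rfl⟩
    rw [idTensor_sum Λ]
    refine posSemidef_sum _ _ fun m _ => ?_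
    rw [idTensor_smul Λ]
    refine smul_posSemidef ?_ (hc m)
    obtain ⟨u, v, hψ⟩ := hrank m
    have hw : ∀ p : Fin d × Fin d, ψ m p
        = ∑ t : Fin r, (fun a t => u t a) p.1 t * (fun q : Fin r × Fin d => v q.1 q.2) (t, p.2) := by
      intro p; rw [hψ]
    rw [idTensor_conj d r d Λ (fun a t => u t a) (fun q : Fin r × Fin d => v q.1 q.2) (ψ m) hw]
    exact (h _ (vecMulVec_star_posSemidef _)).mul_mul_conjTranspose_same _
  · -- backward
    intro h σ hσ
    open scoped MatrixOrder in
    obtain ⟨B, hB⟩ := CStarAlgebra.nonneg_iff_eq_star_mul_self.mp hσ.nonneg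
    have hB : σ = Bᴴ * B := hB
    have hdecomp : σ = ∑ m : Fin r × Fin d,
        Matrix.vecMulVec (fun p => star (B m p)) (star fun p => star (B m p)) := by
      rw [hB]
      ext p q
      simp [Matrix.mul_apply, Matrix.sum_apply, vecMulVec_apply, conjTranspose_apply,
        mul_comm]
    rw [hdecomp, idTensor_sum Λ]
    refine posSemidef_sum _ _ fun m _ => ?_
    set w : Fin r × Fin d → ℂ := fun p => star (B m p) with hwdef
    rcases le_or_gt r d with hrd | hdr
    · -- r ≤ d
      set ψ : Fin d × Fin d → ℂ :=
        fun q => if hq : (q.1 : ℕ) < r then w (⟨q.1, hq⟩, q.2) else 0 with hψdef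
      have hw : ∀ p : Fin r × Fin d, w p
          = ∑ s : Fin d, (if s = Fin.castLE hrd p.1 then (1:ℂ) else 0) * ψ (s, p.2) := by
        intro p
        rw [Finset.sum_eq_single (Fin.castLE hrd p.1)]
        · simp [hψdef, Fin.is_lt]
        · intro s _ hs; simp [hs]
        · simp
      rw [idTensor_conj r d d Λ (fun a s => if s = Fin.castLE hrd a then 1 else 0) ψ w hw]
      refine ((h _ (vecMulVec_star_posSemidef _) ?_)).mul_mul_conjTranspose_same _
      refine ⟨1, fun _ => 1, fun _ => ψ, fun _ => zero_le_one, fun _ => ?_, by simp⟩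
      refine ⟨fun t s => if s = Fin.castLE hrd t then 1 else 0, fun t i => w (t, i), ?_⟩
      funext p
      show ψ p = ∑ t : Fin r, (if p.1 = Fin.castLE hrd t then (1:ℂ) else 0) * w (t, p.2)
      by_cases hq : (p.1 : ℕ) < r
      · rw [show ψ p = w (⟨p.1, hq⟩, p.2) by simp [hψdef, hq]]
        rw [Finset.sum_eq_single (⟨(p.1 : ℕ), hq⟩ : Fin r)]
        · simp [Fin.ext_iff]
        · intro t _ ht
          rw [if_neg, zero_mul]
          intro hEq
          exact ht (by simp [Fin.ext_iff] at hEq ⊢; omega)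
        · simp
      · rw [show ψ p = 0 by simp [hψdef, hq]]
        rw [eq_comm]
        refine Finset.sum_eq_zero fun t _ => ?_
        rw [if_neg, zero_mul]
        intro hEq
        have : (p.1 : ℕ) = (t : ℕ) := by simpa [Fin.ext_iff] using hEq
        omega
    · -- d < r
      set ψ : Fin d × Fin d → ℂ := fun q => if q.1 = q.2 then (1:ℂ) else 0 with hψdef
      have hw : ∀ p : Fin r × Fin d, w p
          = ∑ t : Fin d, w (p.1, t) * ψ (t, p.2) := by
        intro p
        simp [hψdef, mul_ite, Finset.sum_ite_eq']
      rw [idTensor_conj r d d Λ (fun a t => w (a, t)) ψ w hw]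
      refine ((h _ (vecMulVec_star_posSemidef _) ?_)).mul_mul_conjTranspose_same _
      refine ⟨1, fun _ => 1, fun _ => ψ, fun _ => zero_le_one, fun _ => ?_, by simp⟩
      refine ⟨fun t s => if (t : ℕ) = (s : ℕ) then 1 else 0,
              fun t s => if (t : ℕ) = (s : ℕ) then 1 else 0, ?_⟩
      funext p
      show ψ p = ∑ t : Fin r,
          (if (t : ℕ) = (p.1 : ℕ) then (1:ℂ) else 0) * (if (t : ℕ) = (p.2 : ℕ) then (1:ℂ) else 0)
      rw [Finset.sum_eq_single (Fin.castLE hdr.le p.1)]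
      · by_cases hpq : p.1 = p.2 <;> simp [hψdef, hpq, Fin.ext_iff]
      · intro t _ ht
        have hne : (t : ℕ) ≠ (p.1 : ℕ) := by
          intro hEq; exact ht (by simp [Fin.ext_iff]; omega)
        simp [hne]
      · simp
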